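/- Let (Ω, 𝓕, ℙ) be a probability space, let t > 0, and let x : ℝ × Ω → ℝ be a jointly measurable process with x(s, ω) ∈ {0, 1} for all s, ω such that for every ε ∈ (0, t] the event J_ε := {ω : ∃ s ∈ [t−ε, t], x(s, ω) ≠ x(t, ω)} is measurable, and ℙ(J_ε) → 0 as ε → 0⁺. For each γ > 0, let B^γ be a real-valued process such that for all 0 ≤ u ≤ v, B^γ_v − B^γ_u is square-integrable with 𝔼[(B^γ_v − B^γ_u)²] = v − u; define y^γ_u := ∫_0^u x_s ds + γ^{−1/2} B^γ_u, let 𝒢^γ be the σ-algebra generated by (y^γ_s)_{s ≤ t}, and π_t^γ := 𝔼[x(t, ·) | 𝒢^γ]. Then lim_{γ → ∞} 𝔼[(π_t^γ − x(t, ·))²] = 0. -/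

import Mathlib

open MeasureTheory ProbabilityTheory Real Filter Topology
open scoped ProbabilityTheory

theorem aux_condexp_L2_min
    {Ω : Type*} {mΩ : MeasurableSpace Ω} {μ : Measure Ω} [IsProbabilityMeasure μ]
    {m : MeasurableSpace Ω} (hm : m ≤ mΩ)
    {f Z : Ω → ℝ} (hf_meas : Measurable[mΩ] f) (hf_bdd : ∀ ω, ‖f ω‖ ≤ 1)
    (hZ : MemLp Z 2 μ) (hZm : StronglyMeasurable[m] Z) :
    ∫ ω, ((μ[f|m]) ω - f ω) ^ 2 ∂μ ≤ ∫ ω, (Z ω - f ω) ^ 2 ∂μ := by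
  set p : Ω → ℝ := μ[f|m] with hpdef
  have hf_int : Integrable f μ :=
    (integrable_const (1:ℝ)).mono' hf_meas.aestronglyMeasurable
      (Filter.Eventually.of_forall hf_bdd)
  have hp_sm : StronglyMeasurable[m] p := stronglyMeasurable_condExp
  have hp_int : Integrable p μ := integrable_condExp
  have hp_bdd : ∀ᵐ ω ∂μ, ‖p ω‖ ≤ 1 := by
    have h1 : p ≤ᵐ[μ] μ[fun _ => (1:ℝ)|m] :=
      condExp_mono hf_int (integrable_const _)
        (Filter.Eventually.of_forall fun ω => by
          have := hf_bdd ω; rw [Real.norm_eq_abs, abs_le] at this; exact this.2)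
    have h2 : μ[fun _ => (-1:ℝ)|m] ≤ᵐ[μ] p :=
      condExp_mono (integrable_const _) hf_int
        (Filter.Eventually.of_forall fun ω => by
          have := hf_bdd ω; rw [Real.norm_eq_abs, abs_le] at this; exact this.1)
    rw [condExp_const hm (1:ℝ) (μ := μ)] at h1
    rw [condExp_const hm (-1:ℝ) (μ := μ)] at h2
    filter_upwards [h1, h2] with ω hu hl
    rw [Real.norm_eq_abs, abs_le]
    exact ⟨hl, hu⟩
  have hp_L2 : MemLp p 2 μ := MemLp.of_bound hp_int.aestronglyMeasurable 1 hp_bdd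
  set g : Ω → ℝ := fun ω => Z ω - p ω with hgdef
  set d : Ω → ℝ := fun ω => p ω - f ω with hddef
  have hg_sm : StronglyMeasurable[m] g := hZm.sub hp_sm
  have hg_L2 : MemLp g 2 μ := hZ.sub hp_L2
  have hg_int : Integrable g μ := hg_L2.integrable one_le_two
  have hd_asm : AEStronglyMeasurable[mΩ] d μ :=
    hp_int.aestronglyMeasurable.sub hf_meas.aestronglyMeasurable
  have hd_bdd : ∀ᵐ ω ∂μ, ‖d ω‖ ≤ 2 := by
    filter_upwards [hp_bdd] with ω hp
    calc ‖p ω - f ω‖ ≤ ‖p ω‖ + ‖f ω‖ := norm_sub_le _ _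
      _ ≤ 1 + 1 := add_le_add hp (hf_bdd ω)
      _ = 2 := by norm_num
  have hd_L2 : MemLp d 2 μ := MemLp.of_bound hd_asm 2 hd_bdd
  have hgf_int : Integrable (g * f) μ := by
    have := hg_int.bdd_mul (f := f) (c := 1) hf_meas.aestronglyMeasurable
      (Filter.Eventually.of_forall hf_bdd)
    exact this.congr (Filter.Eventually.of_forall fun ω => mul_comm _ _)
  have hgp_int : Integrable (g * p) μ := by
    have := hg_int.bdd_mul (f := p) (c := 1) hp_int.aestronglyMeasurable hp_bdd
    exact this.congr (Filter.Eventually.of_forall fun ω => mul_comm _ _)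
  have hgd_int : Integrable (fun ω => g ω * d ω) μ := by
    have := hg_int.bdd_mul (f := d) (c := 2) hd_asm hd_bdd
    exact this.congr (Filter.Eventually.of_forall fun ω => mul_comm _ _)
  have hpull : μ[g * f|m] =ᵐ[μ] g * p :=
    condExp_mul_of_stronglyMeasurable_left hg_sm hgf_int hf_int
  have hcross : ∫ ω, g ω * d ω ∂μ = 0 := by
    have h1 : ∫ ω, (g * p) ω ∂μ = ∫ ω, (g * f) ω ∂μ := by
      rw [← integral_condExp hm (f := g * f)]
      exact (integral_congr_ae hpull).symm
    have h2 : ∫ ω, g ω * d ω ∂μ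
        = ∫ ω, (g * p) ω ∂μ - ∫ ω, (g * f) ω ∂μ := by
      rw [← integral_sub hgp_int hgf_int]
      congr 1; ext ω; simp [hddef, mul_sub]
    rw [h2, h1, sub_self]
  have hg2_int : Integrable (fun ω => g ω ^ 2) μ := hg_L2.integrable_sq
  have hd2_int : Integrable (fun ω => d ω ^ 2) μ := hd_L2.integrable_sq
  have key : ∫ ω, (Z ω - f ω) ^ 2 ∂μ
      = (∫ ω, g ω ^ 2 ∂μ) + ((∫ ω, 2 * (g ω * d ω) ∂μ) + ∫ ω, d ω ^ 2 ∂μ) := by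
    have hsum : (fun ω => (Z ω - f ω) ^ 2)
        = fun ω => g ω ^ 2 + (2 * (g ω * d ω) + d ω ^ 2) := by
      funext ω
      have hzf : Z ω - f ω = g ω + d ω := by simp only [hgdef, hddef]; ring
      rw [hzf]; ring
    have h2gd : Integrable (fun ω => 2 * (g ω * d ω)) μ := hgd_int.const_mul 2
    have h23 : Integrable (fun ω => 2 * (g ω * d ω) + d ω ^ 2) μ := h2gd.add hd2_int
    rw [hsum, integral_add hg2_int h23, integral_add h2gd hd2_int]
  have hcross2 : ∫ ω, 2 * (g ω * d ω) ∂μ = 0 := by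
    rw [integral_const_mul, hcross, mul_zero]
  have hg2_nonneg : (0:ℝ) ≤ ∫ ω, g ω ^ 2 ∂μ :=
    integral_nonneg fun ω => sq_nonneg (g ω)
  have : ∫ ω, (p ω - f ω) ^ 2 ∂μ = ∫ ω, d ω ^ 2 ∂μ := rfl
  rw [this, key, hcross2]
  linarith

/-- Claim (2.7): in the weak observation-noise limit `γ → ∞`, the optimal filter
`π_t^γ = E[x_t | σ((y_s^γ)_{s ≤ t})]` converges to `x_t` in `L²(Ω)`. -/
theorem filter_L2_convergence
    {Ω : Type*} [MeasureSpace Ω] [IsProbabilityMeasure (ℙ : Measure Ω)]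
    (t : ℝ) (ht : 0 < t)
    (x : ℝ × Ω → ℝ) (hx_meas : Measurable x)
    (hx01 : ∀ s ω, x (s, ω) = 0 ∨ x (s, ω) = 1)
    (J : ℝ → Set Ω)
    (hJ : ∀ ε ∈ Set.Ioc (0 : ℝ) t,
      J ε = {ω | ∃ s ∈ Set.Icc (t - ε) t, x (s, ω) ≠ x (t, ω)})
    (hJmeas : ∀ ε ∈ Set.Ioc (0 : ℝ) t, MeasurableSet (J ε))
    (hJlim : Tendsto (fun ε => ℙ (J ε)) (𝓝[>] (0 : ℝ)) (𝓝 0))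
    (B : ℝ → ℝ → Ω → ℝ)
    (hBmeas : ∀ γ > (0 : ℝ), ∀ s : ℝ, Measurable (B γ s))
    (hBL2 : ∀ γ > (0 : ℝ), ∀ u v : ℝ, 0 ≤ u → u ≤ v →
      MemLp (fun ω => B γ v ω - B γ u ω) 2 ℙ)
    (hBvar : ∀ γ > (0 : ℝ), ∀ u v : ℝ, 0 ≤ u → u ≤ v →
      ∫ ω, (B γ v ω - B γ u ω) ^ 2 ∂ℙ = v - u)
    (y : ℝ → ℝ → Ω → ℝ)
    (hy : ∀ γ > (0 : ℝ), ∀ u : ℝ, ∀ ω : Ω,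
      y γ u ω = (∫ s in (0 : ℝ)..u, x (s, ω)) + (Real.sqrt γ)⁻¹ * B γ u ω)
    (𝒢 : ℝ → MeasurableSpace Ω)
    (h𝒢 : ∀ γ : ℝ, 𝒢 γ = ⨆ s ∈ Set.Iic t,
      MeasurableSpace.comap (y γ s) (inferInstance : MeasurableSpace ℝ)) :
    Tendsto (fun γ => ∫ ω, ((ℙ[fun ω' => x (t, ω')|𝒢 γ]) ω - x (t, ω)) ^ 2 ∂ℙ)
      atTop (𝓝 0) := by
  set f : Ω → ℝ := fun ω => x (t, ω) with hfdef
  have hf_meas : Measurable f := hx_meas.comp measurable_prodMk_left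
  have hf01 : ∀ ω, 0 ≤ f ω ∧ f ω ≤ 1 := fun ω => by
    rcases hx01 t ω with h | h <;> simp [hfdef, h]
  have hf_bdd : ∀ ω, ‖f ω‖ ≤ 1 := fun ω => by
    rw [Real.norm_eq_abs, abs_le]; exact ⟨by linarith [(hf01 ω).1], (hf01 ω).2⟩
  -- measurability of the running integrals
  have hI : ∀ a b : ℝ, Measurable fun ω => ∫ s in a..b, x (s, ω) := by
    intro a b
    have hsm : ∀ c d : ℝ, StronglyMeasurable fun ω => ∫ s in Set.Ioc c d, x (s, ω) := by
      intro c d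
      exact hx_meas.stronglyMeasurable.integral_prod_left'
        (μ := volume.restrict (Set.Ioc c d))
    exact ((hsm a b).sub (hsm b a)).measurable
  have hxInt : ∀ (a b : ℝ) (ω : Ω), IntervalIntegrable (fun s => x (s, ω)) volume a b := by
    intro a b ω
    have hms : Measurable fun s => x (s, ω) := hx_meas.comp measurable_prodMk_right
    refine IntervalIntegrable.mono_fun' (g := fun _ => (1 : ℝ))
      intervalIntegrable_const hms.aestronglyMeasurable ?_
    refine Filter.Eventually.of_forall fun s => ?_
    rcases hx01 s ω with h | h <;> simp [h]
  have hy_meas : ∀ γ > (0 : ℝ), ∀ s, Measurable (y γ s) := by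
    intro γ hγ s
    have hfun : y γ s = fun ω => (∫ u in (0 : ℝ)..s, x (u, ω)) + (Real.sqrt γ)⁻¹ * B γ s ω :=
      funext (hy γ hγ s)
    rw [hfun]
    exact (hI 0 s).add ((hBmeas γ hγ s).const_mul _)
  have hm : ∀ γ > (0 : ℝ), 𝒢 γ ≤ (MeasureSpace.toMeasurableSpace : MeasurableSpace Ω) := by
    intro γ hγ
    rw [h𝒢]
    exact iSup₂_le fun s _ => measurable_iff_comap_le.mp (hy_meas γ hγ s)
  -- the key quantitative bound
  have hbound : ∀ γ : ℝ, 1 ≤ γ → (Real.sqrt γ)⁻¹ ≤ t →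
      ∫ ω, ((ℙ[f|𝒢 γ]) ω - f ω) ^ 2 ∂ℙ
        ≤ 2 * (ℙ (J ((Real.sqrt γ)⁻¹))).toReal + 2 * (Real.sqrt γ)⁻¹ := by
    intro γ hγ1 hεt
    have hγ : (0 : ℝ) < γ := by linarith
    set ε : ℝ := (Real.sqrt γ)⁻¹ with hεdef
    have hε0 : 0 < ε := inv_pos.2 (Real.sqrt_pos.2 hγ)
    have hεne : ε ≠ 0 := ne_of_gt hε0
    have hεIoc : ε ∈ Set.Ioc (0 : ℝ) t := ⟨hε0, hεt⟩
    have htε0 : (0 : ℝ) ≤ t - ε := by linarith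
    have htε : t - ε ≤ t := by linarith
    set a : Ω → ℝ := fun ω => ε⁻¹ * ∫ s in (t - ε)..t, x (s, ω) with hadef
    set b : Ω → ℝ := fun ω => B γ t ω - B γ (t - ε) ω with hbdef
    set Z : Ω → ℝ := fun ω => ε⁻¹ * (y γ t ω - y γ (t - ε) ω) with hZdef
    -- Z is 𝒢 γ-measurable
    have hys : ∀ s ∈ Set.Iic t, Measurable[𝒢 γ] (y γ s) := by
      intro s hs
      rw [h𝒢]
      exact measurable_iff_comap_le.mpr
        (le_iSup₂ (f := fun s (_ : s ∈ Set.Iic t) =>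
          MeasurableSpace.comap (y γ s) (inferInstance : MeasurableSpace ℝ)) s hs)
    have hZ_sm : StronglyMeasurable[𝒢 γ] Z :=
      (((hys t (Set.mem_Iic.mpr le_rfl)).sub (hys (t - ε) (Set.mem_Iic.mpr htε))).const_mul ε⁻¹).stronglyMeasurable
    -- decomposition of Z
    have hZfun : Z = fun ω => a ω + b ω := by
      funext ω
      have hsplit : (∫ s in (0 : ℝ)..(t - ε), x (s, ω)) + (∫ s in (t - ε)..t, x (s, ω))
          = ∫ s in (0 : ℝ)..t, x (s, ω) :=
        intervalIntegral.integral_add_adjacent_intervals (hxInt 0 (t - ε) ω) (hxInt (t - ε) t ω)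
      simp only [hZdef, hadef, hbdef, hy γ hγ t ω, hy γ hγ (t - ε) ω, ← hεdef]
      calc ε⁻¹ * (((∫ s in (0 : ℝ)..t, x (s, ω)) + ε * B γ t ω)
              - ((∫ s in (0 : ℝ)..(t - ε), x (s, ω)) + ε * B γ (t - ε) ω))
          = ε⁻¹ * (∫ s in (t - ε)..t, x (s, ω))
            + (ε⁻¹ * ε) * (B γ t ω - B γ (t - ε) ω) := by rw [← hsplit]; ring
        _ = ε⁻¹ * (∫ s in (t - ε)..t, x (s, ω)) + (B γ t ω - B γ (t - ε) ω) := by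
            rw [inv_mul_cancel₀ hεne, one_mul]
    -- range of a
    have ha_range : ∀ ω, 0 ≤ a ω ∧ a ω ≤ 1 := by
      intro ω
      have hIl : 0 ≤ ∫ s in (t - ε)..t, x (s, ω) :=
        intervalIntegral.integral_nonneg htε (fun u _ => by
          rcases hx01 u ω with h | h <;> simp [h])
      have hIu : (∫ s in (t - ε)..t, x (s, ω)) ≤ ε := by
        calc (∫ s in (t - ε)..t, x (s, ω)) ≤ ∫ _ in (t - ε)..t, (1 : ℝ) := by
              refine intervalIntegral.integral_mono_on htε (hxInt _ _ ω)
                intervalIntegrable_const fun u _ => ?_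
              rcases hx01 u ω with h | h <;> simp [h]
          _ = ε := by rw [intervalIntegral.integral_const]; simp
      constructor
      · exact mul_nonneg (inv_nonneg.2 hε0.le) hIl
      · calc a ω ≤ ε⁻¹ * ε := mul_le_mul_of_nonneg_left hIu (inv_nonneg.2 hε0.le)
          _ = 1 := inv_mul_cancel₀ hεne
    set A : Ω → ℝ := fun ω => a ω - f ω with hAdef
    have hA_meas : Measurable A := ((hI (t - ε) t).const_mul ε⁻¹).sub hf_meas
    have hA_bdd : ∀ ω, ‖A ω‖ ≤ 1 := fun ω => by
      rw [Real.norm_eq_abs, abs_le]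
      have h1 := ha_range ω; have h2 := hf01 ω
      constructor <;> simp only [hAdef] <;> [linarith [h1.1, h2.2]; linarith [h1.2, h2.1]]
    -- pointwise bound on A² by the indicator of J ε
    have hA_bd : ∀ ω, A ω ^ 2 ≤ Set.indicator (J ε) (fun _ => (1 : ℝ)) ω := by
      intro ω
      by_cases hω : ω ∈ J ε
      · rw [Set.indicator_of_mem hω]
        have h := hA_bdd ω
        rw [Real.norm_eq_abs, abs_le] at h
        nlinarith [h.1, h.2]
      · rw [Set.indicator_of_notMem hω]
        have hxeq : ∀ s ∈ Set.Icc (t - ε) t, x (s, ω) = x (t, ω) := by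
          rw [hJ ε hεIoc] at hω
          simp only [Set.mem_setOf_eq, not_exists] at hω
          push_neg at hω
          exact hω
        have hIconst : (∫ s in (t - ε)..t, x (s, ω)) = ε * f ω := by
          rw [intervalIntegral.integral_congr (g := fun _ => x (t, ω))
            (fun s hs => hxeq s (by rwa [Set.uIcc_of_le htε] at hs))]
          rw [intervalIntegral.integral_const]
          simp [hfdef]
        have hA0 : A ω = 0 := by
          simp only [hAdef, hadef, hIconst]
          rw [← mul_assoc, inv_mul_cancel₀ hεne, one_mul, sub_self]
        rw [hA0]; norm_num
    -- integrability facts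
    have hA_L2 : MemLp A 2 ℙ :=
      MemLp.of_bound hA_meas.aestronglyMeasurable 1 (Filter.Eventually.of_forall hA_bdd)
    have hb_L2 : MemLp b 2 ℙ := hBL2 γ hγ (t - ε) t htε0 htε
    have ha_L2 : MemLp a 2 ℙ := by
      refine MemLp.of_bound (((hI (t - ε) t).const_mul ε⁻¹).aestronglyMeasurable) 1
        (Filter.Eventually.of_forall fun ω => ?_)
      have h := ha_range ω
      rw [Real.norm_eq_abs, abs_le]
      exact ⟨by linarith [h.1], h.2⟩
    have hZ_L2 : MemLp Z 2 ℙ := by rw [hZfun]; exact ha_L2.add hb_L2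
    have hA2_int : Integrable (fun ω => A ω ^ 2) ℙ := hA_L2.integrable_sq
    have hb2_int : Integrable (fun ω => b ω ^ 2) ℙ := hb_L2.integrable_sq
    have hAb_L2 : MemLp (fun ω => A ω + b ω) 2 ℙ := hA_L2.add hb_L2
    have hZf2_int : Integrable (fun ω => (A ω + b ω) ^ 2) ℙ := hAb_L2.integrable_sq
    have hind_int : Integrable (Set.indicator (J ε) (fun _ => (1 : ℝ))) ℙ :=
      (integrable_const (1 : ℝ)).indicator (hJmeas ε hεIoc)
    have hrhs_int : Integrable (fun ω => 2 * A ω ^ 2 + 2 * b ω ^ 2) ℙ :=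
      (hA2_int.const_mul 2).add (hb2_int.const_mul 2)
    -- variance identity for b
    have hb_var : ∫ ω, b ω ^ 2 ∂ℙ = ε := by
      have := hBvar γ hγ (t - ε) t htε0 htε
      simp only [hbdef]
      rw [this]; ring
    -- ∫ A² ≤ ℙ(J ε)
    have hA2_le : ∫ ω, A ω ^ 2 ∂ℙ ≤ (ℙ (J ε)).toReal := by
      calc ∫ ω, A ω ^ 2 ∂ℙ ≤ ∫ ω, Set.indicator (J ε) (fun _ => (1 : ℝ)) ω ∂ℙ :=
            integral_mono hA2_int hind_int hA_bd
        _ = (ℙ (J ε)).toReal := by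
            rw [integral_indicator_const (1 : ℝ) (hJmeas ε hεIoc)]
            simp; rfl
    -- assemble
    calc ∫ ω, ((ℙ[f|𝒢 γ]) ω - f ω) ^ 2 ∂ℙ
        ≤ ∫ ω, (Z ω - f ω) ^ 2 ∂ℙ :=
          aux_condexp_L2_min (μ := ℙ) (hm γ hγ) hf_meas hf_bdd hZ_L2 hZ_sm
      _ = ∫ ω, (A ω + b ω) ^ 2 ∂ℙ := by
          refine integral_congr_ae (Filter.Eventually.of_forall fun ω => ?_)
          rw [hZfun]
          simp only [hAdef]
          ring
      _ ≤ ∫ ω, 2 * A ω ^ 2 + 2 * b ω ^ 2 ∂ℙ := by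
          refine integral_mono hZf2_int hrhs_int fun ω => ?_
          nlinarith [sq_nonneg (A ω - b ω)]
      _ = 2 * (∫ ω, A ω ^ 2 ∂ℙ) + 2 * ∫ ω, b ω ^ 2 ∂ℙ := by
          rw [integral_add (hA2_int.const_mul 2) (hb2_int.const_mul 2),
            integral_const_mul, integral_const_mul]
      _ ≤ 2 * (ℙ (J ε)).toReal + 2 * ε := by
          rw [hb_var]
          linarith [hA2_le]
  -- limit assembly
  have hsq : Tendsto Real.sqrt atTop atTop :=
    (tendsto_rpow_atTop (by norm_num : (0 : ℝ) < 1 / 2)).congr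
      fun x => (Real.sqrt_eq_rpow x).symm
  have hinv : Tendsto (fun γ => (Real.sqrt γ)⁻¹) atTop (𝓝 0) :=
    tendsto_inv_atTop_zero.comp hsq
  have hmem : ∀ᶠ γ in atTop, (Real.sqrt γ)⁻¹ ∈ Set.Ioi (0 : ℝ) := by
    filter_upwards [eventually_ge_atTop (1 : ℝ)] with γ hγ
    exact inv_pos.2 (Real.sqrt_pos.2 (by linarith))
  have hin : Tendsto (fun γ => (Real.sqrt γ)⁻¹) atTop (𝓝[>] (0 : ℝ)) :=
    tendsto_nhdsWithin_iff.mpr ⟨hinv, hmem⟩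
  have hP : Tendsto (fun γ => ℙ (J ((Real.sqrt γ)⁻¹))) atTop (𝓝 0) := hJlim.comp hin
  have hPr : Tendsto (fun γ => (ℙ (J ((Real.sqrt γ)⁻¹))).toReal) atTop (𝓝 0) := by
    have h := (ENNReal.tendsto_toReal ENNReal.zero_ne_top).comp hP
    exact h
  have hG : Tendsto (fun γ => 2 * (ℙ (J ((Real.sqrt γ)⁻¹))).toReal
      + 2 * (Real.sqrt γ)⁻¹) atTop (𝓝 0) := by
    have h := (hPr.const_mul 2).add (hinv.const_mul 2)
    simpa using h
  refine squeeze_zero' ?_ ?_ hG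
  · exact Filter.Eventually.of_forall fun γ =>
      integral_nonneg fun ω => sq_nonneg _
  · filter_upwards [eventually_ge_atTop (max 1 (t⁻¹ ^ 2))] with γ hγ
    have hγ1 : (1 : ℝ) ≤ γ := le_trans (le_max_left _ _) hγ
    have hγt : t⁻¹ ^ 2 ≤ γ := le_trans (le_max_right _ _) hγ
    have hεt : (Real.sqrt γ)⁻¹ ≤ t := by
      have ht' : (0:ℝ) ≤ t⁻¹ := by positivity
      have h1 : t⁻¹ ≤ Real.sqrt γ := by
        have h2 := Real.sqrt_le_sqrt hγt
        rwa [Real.sqrt_sq ht'] at h2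
      have h2 : (Real.sqrt γ)⁻¹ ≤ (t⁻¹)⁻¹ := inv_anti₀ (by positivity) h1
      rwa [inv_inv] at h2
    exact hbound γ hγ1 hεt
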